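/- Let I' = ⟨xy + xz + yz, u − x − y⟩ ⊂ ℂ[x,y,z,u]. Then init_{(0,0,−1,1)}(I') = ⟨x + y, xy + zu⟩, and this ideal is a prime ideal generated by binomials; in particular its intersection with ℂ[x,y,z] contains the non-prime initial ideal ⟨xz + yz⟩ = init_{(0,0,−1)}(⟨xy + xz + yz⟩). -/

import Mathlib

open MvPolynomial

/-- The weight of a monomial exponent `u` with respect to a weight vector `w`. -/
noncomputable def wt {N : ℕ} (w : Fin N → ℝ) (u : Fin N →₀ ℕ) : ℝ :=
  ∑ i, w i * (u i : ℝ)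

open Classical in
/-- The initial form of a polynomial `f` with respect to a weight vector `w`:
the sum of the terms whose weight is minimal among the terms of `f`. -/
noncomputable def initialForm {N : ℕ} (w : Fin N → ℝ) (f : MvPolynomial (Fin N) ℂ) :
    MvPolynomial (Fin N) ℂ :=
  ∑ u ∈ f.support, if ∀ v ∈ f.support, wt w u ≤ wt w v then monomial u (coeff u f) else 0

/-- The initial ideal of `I` with respect to a weight vector `w`. -/
noncomputable def initialIdeal {N : ℕ} (w : Fin N → ℝ) (I : Ideal (MvPolynomial (Fin N) ℂ)) :
    Ideal (MvPolynomial (Fin N) ℂ) :=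
  Ideal.span {g | ∃ f ∈ I, f ≠ 0 ∧ g = initialForm w f}

/-- An ideal is binomial if it is generated by polynomials with at most two terms. -/
def IsBinomialIdeal {N : ℕ} (I : Ideal (MvPolynomial (Fin N) ℂ)) : Prop :=
  ∃ S : Set (MvPolynomial (Fin N) ℂ), I = Ideal.span S ∧ ∀ f ∈ S, f.support.card ≤ 2

namespace InitAux
variable {N : ℕ}

def dwt (c : Fin N → ℤ) (u : Fin N →₀ ℕ) : ℤ := ∑ i, c i * (u i : ℤ)

lemma dwt_add (c : Fin N → ℤ) (u v : Fin N →₀ ℕ) : dwt c (u + v) = dwt c u + dwt c v := by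
  simp only [dwt, Finsupp.add_apply]
  rw [← Finset.sum_add_distrib]
  congr 1; ext i; push_cast; ring

lemma dwt_single (c : Fin N → ℤ) (i : Fin N) : dwt c (Finsupp.single i 1) = c i := by
  simp [dwt, Finsupp.single_apply]

open Classical in
noncomputable def comp (c : Fin N → ℤ) (k : ℤ) (f : MvPolynomial (Fin N) ℂ) :
    MvPolynomial (Fin N) ℂ :=
  ∑ u ∈ f.support, if dwt c u = k then monomial u (coeff u f) else 0

lemma coeff_comp (c : Fin N → ℤ) (k : ℤ) (f : MvPolynomial (Fin N) ℂ) (v : Fin N →₀ ℕ) :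
    coeff v (comp c k f) = if dwt c v = k then coeff v f else 0 := by
  classical
  rw [comp, coeff_sum]
  by_cases hv : v ∈ f.support
  · rw [Finset.sum_eq_single_of_mem v hv]
    · split_ifs with h
      · simp
      · simp
    · intro u hu hne
      split_ifs with h
      · simp [coeff_monomial, hne]
      · simp
  · have hv0 : coeff v f = 0 := by rwa [mem_support_iff, not_not] at hv
    rw [Finset.sum_eq_zero, hv0]
    · simp
    · intro u hu
      have hne : u ≠ v := fun h => hv (h ▸ hu)
      split_ifs with h
      · simp [coeff_monomial, hne]
      · simp

def IsHg (c : Fin N → ℤ) (n : ℤ) (f : MvPolynomial (Fin N) ℂ) : Prop :=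
  ∀ u ∈ f.support, dwt c u = n

lemma comp_zero (c : Fin N → ℤ) (k : ℤ) : comp c k (0 : MvPolynomial (Fin N) ℂ) = 0 := by
  ext v; simp [coeff_comp]

lemma comp_add (c : Fin N → ℤ) (k : ℤ) (f g : MvPolynomial (Fin N) ℂ) :
    comp c k (f + g) = comp c k f + comp c k g := by
  ext v; simp only [coeff_comp, coeff_add]; split_ifs <;> simp

lemma comp_sub (c : Fin N → ℤ) (k : ℤ) (f g : MvPolynomial (Fin N) ℂ) :
    comp c k (f - g) = comp c k f - comp c k g := by
  ext v; simp only [coeff_comp, coeff_sub]; split_ifs <;> simp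

lemma isHg_comp (c : Fin N → ℤ) (k : ℤ) (f : MvPolynomial (Fin N) ℂ) : IsHg c k (comp c k f) := by
  intro u hu
  rw [mem_support_iff, coeff_comp] at hu
  by_contra h
  simp [h] at hu

lemma comp_eq_self_of_isHg {c : Fin N → ℤ} {n : ℤ} {f : MvPolynomial (Fin N) ℂ}
    (h : IsHg c n f) : comp c n f = f := by
  ext v; rw [coeff_comp]
  split_ifs with hv
  · rfl
  · by_contra hc
    exact hv (h v (by rw [mem_support_iff]; exact fun h0 => hc h0.symm))

lemma comp_eq_zero_of_isHg {c : Fin N → ℤ} {n k : ℤ} {f : MvPolynomial (Fin N) ℂ}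
    (h : IsHg c n f) (hk : k ≠ n) : comp c k f = 0 := by
  ext v; rw [coeff_comp]
  split_ifs with hv
  · by_contra hc
    exact hk (hv ▸ h v (by rw [mem_support_iff]; exact hc))
  · rfl

lemma IsHg.mul {c : Fin N → ℤ} {m n : ℤ} {f g : MvPolynomial (Fin N) ℂ}
    (hf : IsHg c m f) (hg : IsHg c n g) : IsHg c (m + n) (f * g) := by
  classical
  intro u hu
  have := MvPolynomial.support_mul f g hu
  rw [Finset.mem_add] at this
  obtain ⟨a, ha, b, hb, rfl⟩ := this
  rw [dwt_add, hf a ha, hg b hb]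

lemma IsHg.add {c : Fin N → ℤ} {n : ℤ} {f g : MvPolynomial (Fin N) ℂ}
    (hf : IsHg c n f) (hg : IsHg c n g) : IsHg c n (f + g) := by
  classical
  intro u hu
  rcases Finset.mem_union.mp (MvPolynomial.support_add hu) with h | h
  · exact hf u h
  · exact hg u h

lemma isHg_X (c : Fin N → ℤ) (i : Fin N) : IsHg c (c i) (X i : MvPolynomial (Fin N) ℂ) := by
  intro u hu
  rw [support_X, Finset.mem_singleton] at hu
  rw [hu, dwt_single]

lemma isHg_X_mul_X (c : Fin N → ℤ) (i j : Fin N) :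
    IsHg c (c i + c j) (X i * X j : MvPolynomial (Fin N) ℂ) := by
  have := (isHg_X c i).mul (isHg_X c j)
  exact this

lemma comp_eq_zero_of_not_mem {c : Fin N → ℤ} {k : ℤ} {f : MvPolynomial (Fin N) ℂ}
    (h : k ∉ f.support.image (dwt c)) : comp c k f = 0 := by
  ext v; rw [coeff_comp]
  split_ifs with hv
  · by_contra hc
    exact h (hv ▸ Finset.mem_image_of_mem (dwt c) (by rw [mem_support_iff]; exact hc))
  · rfl

lemma sum_comp (c : Fin N → ℤ) (f : MvPolynomial (Fin N) ℂ) :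
    ∑ k ∈ f.support.image (dwt c), comp c k f = f := by
  classical
  ext v
  rw [coeff_sum]
  simp only [coeff_comp]
  by_cases hv : v ∈ f.support
  · rw [Finset.sum_eq_single_of_mem (dwt c v) (Finset.mem_image_of_mem _ hv)]
    · simp
    · intro k hk hne; simp [Ne.symm hne]
  · have hv0 : coeff v f = 0 := by rwa [mem_support_iff, not_not] at hv
    rw [hv0, Finset.sum_eq_zero]
    intro k hk; split_ifs <;> rfl

lemma comp_finsetSum {α : Type*} (c : Fin N → ℤ) (k : ℤ) (s : Finset α)
    (F : α → MvPolynomial (Fin N) ℂ) :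
    comp c k (∑ i ∈ s, F i) = ∑ i ∈ s, comp c k (F i) := by
  classical
  ext v
  rw [coeff_comp, coeff_sum, coeff_sum]
  split_ifs with h
  · exact Finset.sum_congr rfl fun i _ => by rw [coeff_comp, if_pos h]
  · rw [Finset.sum_eq_zero]
    intro i _; rw [coeff_comp, if_neg h]

lemma comp_mul_isHg {c : Fin N → ℤ} {n : ℤ} {H : MvPolynomial (Fin N) ℂ}
    (hH : IsHg c n H) (k : ℤ) (g : MvPolynomial (Fin N) ℂ) :
    comp c k (g * H) = comp c (k - n) g * H := by
  classical
  conv_lhs => rw [← sum_comp c g]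
  rw [Finset.sum_mul, comp_finsetSum]
  have key : ∀ j ∈ g.support.image (dwt c),
      comp c k (comp c j g * H) = if j = k - n then comp c j g * H else 0 := by
    intro j _
    have hprod : IsHg c (j + n) (comp c j g * H) := (isHg_comp c j g).mul hH
    by_cases hj : j = k - n
    · rw [if_pos hj]
      apply comp_eq_self_of_isHg
      convert hprod using 2
      omega
    · rw [if_neg hj]
      exact comp_eq_zero_of_isHg hprod (by omega)
  rw [Finset.sum_congr rfl key, Finset.sum_ite_eq' (g.support.image (dwt c)) (k - n)
    (fun j => comp c j g * H)]
  split_ifs with h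
  · rfl
  · rw [comp_eq_zero_of_not_mem h, zero_mul]

/-- matching weights -/
def Mw (w : Fin N → ℝ) (c : Fin N → ℤ) : Prop := ∀ u, wt w u = ((dwt c u : ℤ) : ℝ)

lemma init_eq_comp {w : Fin N → ℝ} {c : Fin N → ℤ} (hw : Mw w c)
    {f : MvPolynomial (Fin N) ℂ} (hf : f ≠ 0) :
    initialForm w f =
      comp c ((f.support.image (dwt c)).min'
        ((Finset.image_nonempty).mpr (support_nonempty.mpr hf))) f := by
  classical
  set m := (f.support.image (dwt c)).min' _ with hm
  unfold initialForm comp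
  apply Finset.sum_congr rfl
  intro u hu
  have hiff : (∀ v ∈ f.support, wt w u ≤ wt w v) ↔ dwt c u = m := by
    constructor
    · intro h
      have h1 : m ≤ dwt c u := Finset.min'_le _ _ (Finset.mem_image_of_mem _ hu)
      obtain ⟨v0, hv0, hdv0⟩ := Finset.mem_image.mp
        ((f.support.image (dwt c)).min'_mem ((Finset.image_nonempty).mpr (support_nonempty.mpr hf)))
      have := h v0 hv0
      rw [hw u, hw v0, hdv0] at this
      have h2 : dwt c u ≤ m := by exact_mod_cast this
      omega
    · intro h v hv
      have : m ≤ dwt c v := Finset.min'_le _ _ (Finset.mem_image_of_mem _ hv)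
      rw [hw u, hw v, h]
      exact_mod_cast this
  exact if_congr hiff rfl rfl

lemma split_spec {w : Fin N → ℝ} {c : Fin N → ℤ} (hw : Mw w c) {n : ℤ}
    {H E : MvPolynomial (Fin N) ℂ} (hH : IsHg c n H) (hHne : H ≠ 0)
    (hE : ∀ u ∈ E.support, n < dwt c u) :
    H + E ≠ 0 ∧ initialForm w (H + E) = H := by
  classical
  set f := H + E with hf
  have hcoe : ∀ v, dwt c v = n → coeff v E = 0 := by
    intro v hv
    by_contra hc
    exact absurd hv (by have := hE v (by rwa [mem_support_iff]); omega)
  have hcoH : ∀ v, dwt c v ≠ n → coeff v H = 0 := by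
    intro v hv
    by_contra hc
    exact hv (hH v (by rwa [mem_support_iff]))
  obtain ⟨u0, hu0⟩ := support_nonempty.mpr hHne
  have hu0n : dwt c u0 = n := hH u0 hu0
  have hcu0 : coeff u0 f = coeff u0 H := by
    rw [hf, coeff_add, hcoe u0 hu0n, add_zero]
  have hfne : f ≠ 0 := by
    intro h0
    rw [h0, coeff_zero] at hcu0
    exact (mem_support_iff.mp hu0) hcu0.symm
  refine ⟨hfne, ?_⟩
  have hne' : (f.support.image (dwt c)).Nonempty :=
    Finset.image_nonempty.mpr (support_nonempty.mpr hfne)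
  have hmin : (f.support.image (dwt c)).min' hne' = n := by
    apply le_antisymm
    · apply Finset.min'_le
      apply Finset.mem_image.mpr
      refine ⟨u0, ?_, hu0n⟩
      rw [mem_support_iff]
      rw [hcu0]
      exact mem_support_iff.mp hu0
    · apply Finset.le_min'
      intro y hy
      obtain ⟨v, hv, rfl⟩ := Finset.mem_image.mp hy
      by_contra hlt
      push_neg at hlt
      have hvn : dwt c v ≠ n := by omega
      have h1 : coeff v H = 0 := hcoH v hvn
      have h2 : coeff v E = 0 := by
        by_contra hc
        have := hE v (by rwa [mem_support_iff])
        omega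
      have : coeff v f = 0 := by rw [hf, coeff_add, h1, h2, add_zero]
      exact (mem_support_iff.mp hv) this
  rw [init_eq_comp hw hfne]
  ext v
  rw [coeff_comp]
  simp only [hmin]
  split_ifs with hv
  · rw [hf, coeff_add, hcoe v hv, add_zero]
  · rw [hcoH v hv]

lemma comp_min_ne_zero {c : Fin N → ℤ} {f : MvPolynomial (Fin N) ℂ} (hf : f ≠ 0) :
    comp c ((f.support.image (dwt c)).min'
      ((Finset.image_nonempty).mpr (support_nonempty.mpr hf))) f ≠ 0 := by
  obtain ⟨v, hv, hdv⟩ := Finset.mem_image.mp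
    ((f.support.image (dwt c)).min'_mem ((Finset.image_nonempty).mpr (support_nonempty.mpr hf)))
  intro h0
  have h1 := congrArg (fun p => coeff v p) h0
  simp only [coeff_comp, coeff_zero, if_pos hdv] at h1
  exact (mem_support_iff.mp hv) h1

lemma comp_eq_zero_of_lt_min {c : Fin N → ℤ} {f : MvPolynomial (Fin N) ℂ} (hf : f ≠ 0)
    {k : ℤ} (hk : k < (f.support.image (dwt c)).min'
      ((Finset.image_nonempty).mpr (support_nonempty.mpr hf))) :
    comp c k f = 0 := by
  apply comp_eq_zero_of_not_mem
  intro hmem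
  exact absurd (Finset.min'_le _ _ hmem) (by omega)

lemma init_mul {w : Fin N → ℝ} {c : Fin N → ℤ} (hw : Mw w c)
    {f g : MvPolynomial (Fin N) ℂ} (hf : f ≠ 0) (hg : g ≠ 0) :
    initialForm w (f * g) = initialForm w f * initialForm w g := by
  classical
  set mf := (f.support.image (dwt c)).min'
    ((Finset.image_nonempty).mpr (support_nonempty.mpr hf)) with hmf
  set mg := (g.support.image (dwt c)).min'
    ((Finset.image_nonempty).mpr (support_nonempty.mpr hg)) with hmg
  set A := comp c mf f with hA
  set B := comp c mg g with hB
  have hAH : IsHg c mf A := isHg_comp c mf f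
  have hBH : IsHg c mg B := isHg_comp c mg g
  have hAne : A ≠ 0 := comp_min_ne_zero hf
  have hBne : B ≠ 0 := comp_min_ne_zero hg
  set Ef := f - A with hEf
  set Eg := g - B with hEg
  have hEfs : ∀ u ∈ Ef.support, mf < dwt c u := by
    intro u hu
    have hc : coeff u Ef ≠ 0 := mem_support_iff.mp hu
    rw [hEf, coeff_sub, hA, coeff_comp] at hc
    split_ifs at hc with h
    · simp at hc
    · have huf : u ∈ f.support := mem_support_iff.mpr (by simpa using hc)
      have : mf ≤ dwt c u := Finset.min'_le _ _ (Finset.mem_image_of_mem _ huf)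
      omega
  have hEgs : ∀ u ∈ Eg.support, mg < dwt c u := by
    intro u hu
    have hc : coeff u Eg ≠ 0 := mem_support_iff.mp hu
    rw [hEg, coeff_sub, hB, coeff_comp] at hc
    split_ifs at hc with h
    · simp at hc
    · have hug : u ∈ g.support := mem_support_iff.mpr (by simpa using hc)
      have : mg ≤ dwt c u := Finset.min'_le _ _ (Finset.mem_image_of_mem _ hug)
      omega
  set E := A * Eg + Ef * B + Ef * Eg with hE
  have hfg : f * g = A * B + E := by rw [hE, hEf, hEg]; ring
  have hmul : ∀ (P Q : MvPolynomial (Fin N) ℂ) (u : Fin N →₀ ℕ), u ∈ (P * Q).support →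
      ∃ a ∈ P.support, ∃ b ∈ Q.support, a + b = u := by
    intro P Q u hu
    exact Finset.mem_add.mp (MvPolynomial.support_mul P Q hu)
  have hEsupp : ∀ u ∈ E.support, mf + mg < dwt c u := by
    intro u hu
    have h1 := MvPolynomial.support_add (p := A * Eg + Ef * B) (q := Ef * Eg) hu
    rcases Finset.mem_union.mp h1 with h2 | h2
    · rcases Finset.mem_union.mp (MvPolynomial.support_add (p := A * Eg) (q := Ef * B) h2)
        with h3 | h3
      · obtain ⟨a, ha, b, hb, rfl⟩ := hmul _ _ _ h3
        have := hAH a ha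
        have := hEgs b hb
        rw [dwt_add]
        omega
      · obtain ⟨a, ha, b, hb, rfl⟩ := hmul _ _ _ h3
        have := hEfs a ha
        have := hBH b hb
        rw [dwt_add]
        omega
    · obtain ⟨a, ha, b, hb, rfl⟩ := hmul _ _ _ h2
      have := hEfs a ha
      have := hEgs b hb
      rw [dwt_add]
      omega
  have hABne : A * B ≠ 0 := mul_ne_zero hAne hBne
  have hABH : IsHg c (mf + mg) (A * B) := hAH.mul hBH
  have hsplit := split_spec hw hABH hABne hEsupp
  rw [hfg, hsplit.2, init_eq_comp hw hf, init_eq_comp hw hg, ← hmf, ← hmg, ← hA, ← hB]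

end InitAux

section Concrete
open InitAux

-- irreducibility helper
lemma lin_irred {R : Type*} [CommRing R] [IsDomain R] {a b : R} (ha : a ≠ 0)
    (hu : ∀ d : R, d ∣ a → d ∣ b → IsUnit d) :
    Irreducible (Polynomial.C a * Polynomial.X + Polynomial.C b) := by
  have hc1 : (Polynomial.C a * Polynomial.X + Polynomial.C b).coeff 1 = a := by simp
  have hc0 : (Polynomial.C a * Polynomial.X + Polynomial.C b).coeff 0 = b := by simp
  have hne : Polynomial.C a * Polynomial.X + Polynomial.C b ≠ 0 :=
    fun h0 => ha (by rw [← hc1, h0, Polynomial.coeff_zero])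
  constructor
  · intro h
    obtain ⟨r, -, hr⟩ := Polynomial.isUnit_iff.mp h
    have := Polynomial.natDegree_linear ha (b := b)
    rw [← hr, Polynomial.natDegree_C] at this
    exact one_ne_zero this.symm
  · intro g h hgh
    have hg0 : g ≠ 0 := fun h0 => hne (by rw [hgh, h0, zero_mul])
    have hh0 : h ≠ 0 := fun h0 => hne (by rw [hgh, h0, mul_zero])
    have hdeg : g.natDegree + h.natDegree = 1 := by
      rw [← Polynomial.natDegree_mul hg0 hh0, ← hgh, Polynomial.natDegree_linear ha]
    have hcase : g.natDegree = 0 ∨ h.natDegree = 0 := by omega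
    rcases hcase with h0 | h0
    · obtain ⟨cst, hc⟩ := Polynomial.natDegree_eq_zero.mp h0
      left
      have hca : cst ∣ a := ⟨h.coeff 1, by
        rw [← hc1, hgh, ← hc, mul_comm, Polynomial.coeff_mul_C, mul_comm]⟩
      have hcb : cst ∣ b := ⟨h.coeff 0, by
        rw [← hc0, hgh, ← hc, mul_comm, Polynomial.coeff_mul_C, mul_comm]⟩
      rw [← hc]
      exact (Polynomial.isUnit_C).mpr (hu cst hca hcb)
    · obtain ⟨cst, hc⟩ := Polynomial.natDegree_eq_zero.mp h0
      right
      have hca : cst ∣ a := ⟨g.coeff 1, by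
        rw [← hc1, hgh, ← hc, Polynomial.coeff_mul_C, mul_comm]⟩
      have hcb : cst ∣ b := ⟨g.coeff 0, by
        rw [← hc0, hgh, ← hc, Polynomial.coeff_mul_C, mul_comm]⟩
      rw [← hc]
      exact (Polynomial.isUnit_C).mpr (hu cst hca hcb)

lemma mv_prime_X {m : ℕ} (i : Fin (m+1)) : Prime (X i : MvPolynomial (Fin (m+1)) ℂ) := by
  let e := (renameEquiv ℂ (Equiv.swap i 0)).trans (finSuccEquiv ℂ m)
  apply (MulEquiv.prime_iff e.toRingEquiv.toMulEquiv).mp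
  have : e (X i) = Polynomial.X := by
    show (finSuccEquiv ℂ m) ((renameEquiv ℂ (Equiv.swap i 0)) (X i)) = Polynomial.X
    rw [renameEquiv_apply, rename_X, Equiv.swap_apply_left, finSuccEquiv_X_zero]
  show Prime (e (X i))
  rw [this]
  exact Polynomial.prime_X

lemma unit_of_common_dvd {n : ℕ} {i : Fin n} {b : MvPolynomial (Fin n) ℂ}
    (hXp : Prime (X i : MvPolynomial (Fin n) ℂ))
    (hnd : ¬ (X i : MvPolynomial (Fin n) ℂ) ∣ b) :
    ∀ d : MvPolynomial (Fin n) ℂ, d ∣ X i → d ∣ b → IsUnit d := by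
  intro d hdX hdb
  obtain ⟨e, he⟩ := hdX
  rcases hXp.irreducible.isUnit_or_isUnit he with h | h
  · exact h
  · exfalso
    apply hnd
    obtain ⟨u, hu⟩ := h
    have hd : (X i : MvPolynomial (Fin n) ℂ) * ↑u⁻¹ = d := by
      rw [he, ← hu, mul_assoc]
      simp
    exact dvd_trans ⟨↑u⁻¹, hd.symm⟩ hdb

lemma prime_gen3 : Prime (X 1 * X 2 - X 0 ^ 2 : MvPolynomial (Fin 3) ℂ) := by
  let e := (renameEquiv ℂ (Equiv.swap (0 : Fin 3) 1)).trans (finSuccEquiv ℂ 2)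
  apply (MulEquiv.prime_iff e.toRingEquiv.toMulEquiv).mp
  show Prime (e (X 1 * X 2 - X 0 ^ 2))
  have he : e (X 1 * X 2 - X 0 ^ 2) =
      Polynomial.C (X 1) * Polynomial.X + Polynomial.C (-(X 0 ^ 2)) := by
    rw [show e = (renameEquiv ℂ (Equiv.swap (0 : Fin 3) 1)).trans (finSuccEquiv ℂ 2) from rfl, AlgEquiv.trans_apply]
    rw [renameEquiv_apply, map_sub, map_mul, map_pow, rename_X, rename_X, rename_X]
    rw [Equiv.swap_apply_right, Equiv.swap_apply_left]
    have h2 : Equiv.swap (0 : Fin 3) 1 2 = 2 := by decide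
    rw [h2, map_sub, map_mul, map_pow]
    have e0 : (finSuccEquiv ℂ 2) (X (0 : Fin 3)) = Polynomial.X := finSuccEquiv_X_zero
    have e1 : (finSuccEquiv ℂ 2) (X (1 : Fin 3)) = Polynomial.C (X 0) := by
      have h : (1 : Fin 3) = Fin.succ 0 := rfl
      rw [h, finSuccEquiv_X_succ]
    have e2 : (finSuccEquiv ℂ 2) (X (2 : Fin 3)) = Polynomial.C (X 1) := by
      have h : (2 : Fin 3) = Fin.succ 1 := rfl
      rw [h, finSuccEquiv_X_succ]
    rw [e0, e1, e2, map_neg, map_pow]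
    ring
  rw [he]
  apply (UniqueFactorizationMonoid.irreducible_iff_prime (α := Polynomial (MvPolynomial (Fin 2) ℂ))).mp
  apply lin_irred (MvPolynomial.X_ne_zero 1)
  apply unit_of_common_dvd (mv_prime_X 1)
  intro hdvd
  obtain ⟨t, ht⟩ := hdvd
  have h := congrArg (eval ![1, 0]) ht
  simp at h

lemma prime_f3 : Prime (X 0 * X 1 + X 2 * X 3 : MvPolynomial (Fin 4) ℂ) := by
  let e := (renameEquiv ℂ (Equiv.swap (0 : Fin 4) 3)).trans (finSuccEquiv ℂ 3)
  apply (MulEquiv.prime_iff e.toRingEquiv.toMulEquiv).mp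
  show Prime (e (X 0 * X 1 + X 2 * X 3))
  have he : e (X 0 * X 1 + X 2 * X 3) =
      Polynomial.C (X 1) * Polynomial.X + Polynomial.C (X 0 * X 2) := by
    rw [show e = (renameEquiv ℂ (Equiv.swap (0 : Fin 4) 3)).trans (finSuccEquiv ℂ 3) from rfl, AlgEquiv.trans_apply]
    rw [renameEquiv_apply, map_add, map_mul, map_mul, rename_X, rename_X, rename_X, rename_X]
    rw [Equiv.swap_apply_left, Equiv.swap_apply_right]
    have h1 : Equiv.swap (0 : Fin 4) 3 1 = 1 := by decide
    have h2 : Equiv.swap (0 : Fin 4) 3 2 = 2 := by decide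
    rw [h1, h2, map_add, map_mul, map_mul]
    have e0 : (finSuccEquiv ℂ 3) (X (0 : Fin 4)) = Polynomial.X := finSuccEquiv_X_zero
    have e1 : (finSuccEquiv ℂ 3) (X (1 : Fin 4)) = Polynomial.C (X 0) := by
      have h : (1 : Fin 4) = Fin.succ 0 := rfl
      rw [h, finSuccEquiv_X_succ]
    have e2 : (finSuccEquiv ℂ 3) (X (2 : Fin 4)) = Polynomial.C (X 1) := by
      have h : (2 : Fin 4) = Fin.succ 1 := rfl
      rw [h, finSuccEquiv_X_succ]
    have e3 : (finSuccEquiv ℂ 3) (X (3 : Fin 4)) = Polynomial.C (X 2) := by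
      have h : (3 : Fin 4) = Fin.succ 2 := rfl
      rw [h, finSuccEquiv_X_succ]
    rw [e0, e1, e2, e3, ← map_mul]
    ring
  rw [he]
  apply (UniqueFactorizationMonoid.irreducible_iff_prime (α := Polynomial (MvPolynomial (Fin 3) ℂ))).mp
  apply lin_irred (MvPolynomial.X_ne_zero 1)
  apply unit_of_common_dvd (mv_prime_X 1)
  intro hdvd
  obtain ⟨t, ht⟩ := hdvd
  have h := congrArg (eval ![1, 0, 1]) ht
  simp at h

end Concrete

section Primality
open InitAux

noncomputable def phiJ : MvPolynomial (Fin 4) ℂ →ₐ[ℂ] MvPolynomial (Fin 3) ℂ :=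
  aeval ![X 0, -X 0, X 1, X 2]

noncomputable def sigJ : MvPolynomial (Fin 3) ℂ →ₐ[ℂ] MvPolynomial (Fin 4) ℂ :=
  aeval ![X 0, X 2, X 3]

lemma sub_sig_phi_mem (f : MvPolynomial (Fin 4) ℂ) :
    f - sigJ (phiJ f) ∈ Ideal.span {(X 0 + X 1 : MvPolynomial (Fin 4) ℂ)} := by
  induction f using MvPolynomial.induction_on with
  | C a =>
    have h : phiJ (C a) = C a := by simp [phiJ]
    rw [h]
    have h2 : sigJ (C a) = C a := by simp [sigJ]
    rw [h2, sub_self]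
    exact zero_mem _
  | add p q hp hq =>
    have h : p + q - sigJ (phiJ (p + q)) = (p - sigJ (phiJ p)) + (q - sigJ (phiJ q)) := by
      rw [map_add, map_add]; ring
    rw [h]
    exact add_mem hp hq
  | mul_X p i hp =>
    have hXi : X i - sigJ (phiJ (X i)) ∈ Ideal.span {(X 0 + X 1 : MvPolynomial (Fin 4) ℂ)} := by
      fin_cases i
      · simp [phiJ, sigJ]
      · show X 1 - sigJ (phiJ (X 1)) ∈ Ideal.span {(X 0 + X 1 : MvPolynomial (Fin 4) ℂ)}
        have h : phiJ (X 1) = -X 0 := by simp [phiJ]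
        rw [h, map_neg]
        have h2 : sigJ (X 0) = X 0 := by simp [sigJ]
        rw [h2]
        have h3 : (X 1 : MvPolynomial (Fin 4) ℂ) - - X 0 = X 0 + X 1 := by ring
        rw [h3]
        exact Ideal.subset_span rfl
      · simp [phiJ, sigJ]
      · simp [phiJ, sigJ]
    have key : p * X i - sigJ (phiJ (p * X i)) =
        (p - sigJ (phiJ p)) * X i + sigJ (phiJ p) * (X i - sigJ (phiJ (X i))) := by
      rw [map_mul, map_mul]; ring
    rw [key]
    exact add_mem (Ideal.mul_mem_right _ _ hp) (Ideal.mul_mem_left _ _ hXi)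

lemma J_prime :
    (Ideal.span {X 0 + X 1, X 0 * X 1 + X 2 * X 3} :
      Ideal (MvPolynomial (Fin 4) ℂ)).IsPrime := by
  set J : Ideal (MvPolynomial (Fin 4) ℂ) := Ideal.span {X 0 + X 1, X 0 * X 1 + X 2 * X 3}
    with hJ
  set P : Ideal (MvPolynomial (Fin 3) ℂ) := Ideal.span {X 1 * X 2 - X 0 ^ 2} with hP
  have hPprime : P.IsPrime := by
    rw [hP]
    rw [Ideal.span_singleton_prime]
    · exact prime_gen3
    · intro h0
      have h := congrArg (eval ![0, 1, 1]) h0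
      simp at h
  have hsub : Ideal.span {(X 0 + X 1 : MvPolynomial (Fin 4) ℂ)} ≤ J := by
    rw [hJ]
    apply Ideal.span_mono
    intro x hx
    rw [hx]
    exact Set.mem_insert _ _
  have hkey : J = Ideal.comap phiJ P := by
    apply le_antisymm
    · rw [hJ]
      apply Ideal.span_le.mpr
      intro x hx
      rcases hx with h | h
      · rw [h]
        show phiJ (X 0 + X 1) ∈ P
        have : phiJ (X 0 + X 1) = 0 := by simp [phiJ]
        rw [this]
        exact zero_mem _
      · rw [Set.mem_singleton_iff] at h
        rw [h]
        show phiJ (X 0 * X 1 + X 2 * X 3) ∈ P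
        have : phiJ (X 0 * X 1 + X 2 * X 3) = X 1 * X 2 - X 0 ^ 2 := by simp [phiJ]; ring
        rw [this, hP]
        exact Ideal.subset_span rfl
    · intro f hf
      rw [Ideal.mem_comap, hP, Ideal.mem_span_singleton] at hf
      obtain ⟨t, ht⟩ := hf
      have h1 : f - sigJ (phiJ f) ∈ J := hsub (sub_sig_phi_mem f)
      have h2 : sigJ (phiJ f) ∈ J := by
        rw [ht, map_mul]
        apply Ideal.mul_mem_right
        have hsg : sigJ (X 1 * X 2 - X 0 ^ 2) =
            (X 0 * X 1 + X 2 * X 3) - X 0 * (X 0 + X 1) := by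
          simp [sigJ]; ring
        rw [hsg]
        apply sub_mem
        · exact Ideal.subset_span (Set.mem_insert_of_mem _ rfl)
        · exact Ideal.mul_mem_left _ _ (Ideal.subset_span (Set.mem_insert _ _))
      have h3 : f = (f - sigJ (phiJ f)) + sigJ (phiJ f) := by ring
      rw [h3]
      exact add_mem h1 h2
  rw [hkey]
  exact Ideal.IsPrime.comap _
end Primality

section MainParts
open InitAux

lemma ne_zero_of_eval {n : ℕ} {f : MvPolynomial (Fin n) ℂ} (pt : Fin n → ℂ)
    (h : eval pt f ≠ 0) : f ≠ 0 :=
  fun h0 => h (by rw [h0, map_zero])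

def cc3 : Fin 3 → ℤ := ![0, 0, -1]
def cc4 : Fin 4 → ℤ := ![0, 0, -1, 1]

lemma hw3 : Mw ![0, 0, -1] cc3 := by
  intro u
  unfold wt dwt cc3
  rw [Fin.sum_univ_three, Fin.sum_univ_three]
  have h0 : (![0, 0, -1] : Fin 3 → ℝ) 0 = 0 := rfl
  have h1 : (![0, 0, -1] : Fin 3 → ℝ) 1 = 0 := rfl
  have h2 : (![0, 0, -1] : Fin 3 → ℝ) 2 = -1 := rfl
  have g0 : (![0, 0, -1] : Fin 3 → ℤ) 0 = 0 := rfl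
  have g1 : (![0, 0, -1] : Fin 3 → ℤ) 1 = 0 := rfl
  have g2 : (![0, 0, -1] : Fin 3 → ℤ) 2 = -1 := rfl
  rw [h0, h1, h2, g0, g1, g2]
  push_cast
  ring

lemma hw4 : Mw ![0, 0, -1, 1] cc4 := by
  intro u
  unfold wt dwt cc4
  rw [Fin.sum_univ_four, Fin.sum_univ_four]
  have h0 : (![0, 0, -1, 1] : Fin 4 → ℝ) 0 = 0 := rfl
  have h1 : (![0, 0, -1, 1] : Fin 4 → ℝ) 1 = 0 := rfl
  have h2 : (![0, 0, -1, 1] : Fin 4 → ℝ) 2 = -1 := rfl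
  have h3 : (![0, 0, -1, 1] : Fin 4 → ℝ) 3 = 1 := rfl
  have g0 : (![0, 0, -1, 1] : Fin 4 → ℤ) 0 = 0 := rfl
  have g1 : (![0, 0, -1, 1] : Fin 4 → ℤ) 1 = 0 := rfl
  have g2 : (![0, 0, -1, 1] : Fin 4 → ℤ) 2 = -1 := rfl
  have g3 : (![0, 0, -1, 1] : Fin 4 → ℤ) 3 = 1 := rfl
  rw [h0, h1, h2, h3, g0, g1, g2, g3]
  push_cast
  ring

-- Part: initial ideal in three variables
lemma part_three_vars :
    initialIdeal ![0, 0, -1] (Ideal.span {X 0 * X 1 + X 0 * X 2 + X 1 * X 2}) =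
      Ideal.span {X 0 * X 2 + X 1 * X 2} := by
  classical
  have hH : IsHg cc3 (-1) (X 0 * X 2 + X 1 * X 2 : MvPolynomial (Fin 3) ℂ) := by
    have ha : IsHg cc3 (cc3 0 + cc3 2) (X 0 * X 2 : MvPolynomial (Fin 3) ℂ) :=
      isHg_X_mul_X cc3 0 2
    have hb : IsHg cc3 (cc3 1 + cc3 2) (X 1 * X 2 : MvPolynomial (Fin 3) ℂ) :=
      isHg_X_mul_X cc3 1 2
    have e1 : cc3 0 + cc3 2 = -1 := by decide
    have e2 : cc3 1 + cc3 2 = -1 := by decide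
    rw [e1] at ha
    rw [e2] at hb
    exact ha.add hb
  have hHne : (X 0 * X 2 + X 1 * X 2 : MvPolynomial (Fin 3) ℂ) ≠ 0 := by
    apply ne_zero_of_eval ![1, 1, 1]
    simp
  have hE : ∀ u ∈ (X 0 * X 1 : MvPolynomial (Fin 3) ℂ).support, -1 < dwt cc3 u := by
    intro u hu
    have ha : IsHg cc3 (cc3 0 + cc3 1) (X 0 * X 1 : MvPolynomial (Fin 3) ℂ) :=
      isHg_X_mul_X cc3 0 1
    have e1 : cc3 0 + cc3 1 = 0 := by decide
    rw [e1] at ha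
    have := ha u hu
    omega
  have hsp := split_spec hw3 hH hHne hE
  have hsplit : (X 0 * X 1 + X 0 * X 2 + X 1 * X 2 : MvPolynomial (Fin 3) ℂ) =
      (X 0 * X 2 + X 1 * X 2) + X 0 * X 1 := by ring
  have hf1ne : (X 0 * X 1 + X 0 * X 2 + X 1 * X 2 : MvPolynomial (Fin 3) ℂ) ≠ 0 := by
    rw [hsplit]; exact hsp.1
  have hf1init : initialForm ![0, 0, -1] (X 0 * X 1 + X 0 * X 2 + X 1 * X 2 :
      MvPolynomial (Fin 3) ℂ) = X 0 * X 2 + X 1 * X 2 := by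
    rw [hsplit]; exact hsp.2
  apply le_antisymm
  · apply Ideal.span_le.mpr
    rintro g ⟨f, hfI, hfne, rfl⟩
    obtain ⟨q, hq⟩ := Ideal.mem_span_singleton.mp hfI
    have hq0 : q ≠ 0 := fun h0 => hfne (by rw [hq, h0, mul_zero])
    have : initialForm ![0, 0, -1] f =
        (X 0 * X 2 + X 1 * X 2) * initialForm ![0, 0, -1] q := by
      rw [hq, init_mul hw3 hf1ne hq0, hf1init]
    rw [this]
    exact Ideal.mul_mem_right _ _ (Ideal.subset_span rfl)
  · apply Ideal.span_le.mpr
    intro x hx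
    rw [Set.mem_singleton_iff] at hx
    subst hx
    apply Ideal.subset_span
    exact ⟨X 0 * X 1 + X 0 * X 2 + X 1 * X 2, Ideal.subset_span rfl, hf1ne, hf1init.symm⟩

-- Part: non-primality
lemma part_nonprime :
    ¬ (Ideal.span {X 0 * X 2 + X 1 * X 2} : Ideal (MvPolynomial (Fin 3) ℂ)).IsPrime := by
  intro hpr
  have hmem : ((X 0 + X 1) * X 2 : MvPolynomial (Fin 3) ℂ) ∈
      Ideal.span {X 0 * X 2 + X 1 * X 2} := by
    have h : ((X 0 + X 1) * X 2 : MvPolynomial (Fin 3) ℂ) = X 0 * X 2 + X 1 * X 2 := by ring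
    rw [h]
    exact Ideal.subset_span rfl
  rcases hpr.mem_or_mem hmem with h | h
  · obtain ⟨t, ht⟩ := Ideal.mem_span_singleton.mp h
    have hv := congrArg (eval ![1, 0, 0]) ht
    simp at hv
  · obtain ⟨t, ht⟩ := Ideal.mem_span_singleton.mp h
    have hv := congrArg (eval ![1, -1, 1]) ht
    simp at hv

-- Part: binomial
lemma part_binomial :
    IsBinomialIdeal
      (Ideal.span {X 0 + X 1, X 0 * X 1 + X 2 * X 3} : Ideal (MvPolynomial (Fin 4) ℂ)) := by
  classical
  refine ⟨{X 0 + X 1, X 0 * X 1 + X 2 * X 3}, rfl, ?_⟩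
  intro f hf
  have hXX : ∀ (i j : Fin 4), (X i * X j : MvPolynomial (Fin 4) ℂ).support.card ≤ 1 := by
    intro i j
    have h : (X i * X j : MvPolynomial (Fin 4) ℂ) =
        monomial (Finsupp.single i 1 + Finsupp.single j 1) 1 := by
      rw [X, X, monomial_mul, one_mul]
    rw [h, support_monomial]
    split_ifs <;> simp
  rcases hf with h | h
  · subst h
    calc (X 0 + X 1 : MvPolynomial (Fin 4) ℂ).support.card
        ≤ ((X 0 : MvPolynomial (Fin 4) ℂ).support ∪ (X 1 :
            MvPolynomial (Fin 4) ℂ).support).card :=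
          Finset.card_le_card (MvPolynomial.support_add)
      _ ≤ (X 0 : MvPolynomial (Fin 4) ℂ).support.card +
            (X 1 : MvPolynomial (Fin 4) ℂ).support.card := Finset.card_union_le _ _
      _ ≤ 2 := by rw [support_X, support_X]; simp
  · rw [Set.mem_singleton_iff] at h
    subst h
    calc (X 0 * X 1 + X 2 * X 3 : MvPolynomial (Fin 4) ℂ).support.card
        ≤ ((X 0 * X 1 : MvPolynomial (Fin 4) ℂ).support ∪ (X 2 * X 3 :
            MvPolynomial (Fin 4) ℂ).support).card :=
          Finset.card_le_card (MvPolynomial.support_add)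
      _ ≤ (X 0 * X 1 : MvPolynomial (Fin 4) ℂ).support.card +
            (X 2 * X 3 : MvPolynomial (Fin 4) ℂ).support.card := Finset.card_union_le _ _
      _ ≤ 2 := by have := hXX 0 1; have := hXX 2 3; omega

-- Part: comap
lemma part_comap :
    (Ideal.span {X 0 * X 2 + X 1 * X 2} : Ideal (MvPolynomial (Fin 3) ℂ)) ≤
      Ideal.comap (MvPolynomial.rename (Fin.castSucc : Fin 3 → Fin 4) :
          MvPolynomial (Fin 3) ℂ →ₐ[ℂ] MvPolynomial (Fin 4) ℂ)
        (Ideal.span {X 0 + X 1, X 0 * X 1 + X 2 * X 3}) := by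
  apply Ideal.span_le.mpr
  intro x hx
  rw [Set.mem_singleton_iff] at hx
  subst hx
  rw [SetLike.mem_coe, Ideal.mem_comap]
  have h : (MvPolynomial.rename (Fin.castSucc : Fin 3 → Fin 4) :
      MvPolynomial (Fin 3) ℂ →ₐ[ℂ] MvPolynomial (Fin 4) ℂ)
      (X 0 * X 2 + X 1 * X 2) = (X 0 + X 1) * X 2 := by
    rw [map_add, map_mul, map_mul, rename_X, rename_X, rename_X]
    have e0 : (Fin.castSucc : Fin 3 → Fin 4) 0 = 0 := rfl
    have e1 : (Fin.castSucc : Fin 3 → Fin 4) 1 = 1 := rfl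
    have e2 : (Fin.castSucc : Fin 3 → Fin 4) 2 = 2 := rfl
    rw [e0, e1, e2]
    ring
  rw [h]
  exact Ideal.mul_mem_right _ _ (Ideal.subset_span (Set.mem_insert _ _))

-- homogeneity facts in four variables
lemma hg_s4 : IsHg cc4 0 (X 0 + X 1 : MvPolynomial (Fin 4) ℂ) := by
  have ha := isHg_X cc4 0
  have hb := isHg_X cc4 1
  have e0 : cc4 0 = 0 := rfl
  have e1 : cc4 1 = 0 := rfl
  rw [e0] at ha
  rw [e1] at hb
  exact ha.add hb

lemma hg_X3 : IsHg cc4 1 (X 3 : MvPolynomial (Fin 4) ℂ) := by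
  have ha := isHg_X cc4 3
  have e3 : cc4 3 = 1 := rfl
  rw [e3] at ha
  exact ha

lemma hg_f3 : IsHg cc4 0 (X 0 * X 1 + X 2 * X 3 : MvPolynomial (Fin 4) ℂ) := by
  have ha := isHg_X_mul_X cc4 0 1
  have hb := isHg_X_mul_X cc4 2 3
  have e1 : cc4 0 + cc4 1 = 0 := by decide
  have e2 : cc4 2 + cc4 3 = 0 := by decide
  rw [e1] at ha
  rw [e2] at hb
  exact ha.add hb

lemma f3_ne : (X 0 * X 1 + X 2 * X 3 : MvPolynomial (Fin 4) ℂ) ≠ 0 := by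
  apply ne_zero_of_eval ![1, 1, 1, 1]
  simp

lemma s4_ne : (X 0 + X 1 : MvPolynomial (Fin 4) ℂ) ≠ 0 := by
  apply ne_zero_of_eval ![1, 1, 0, 0]
  simp

lemma f3_not_dvd_s4 :
    ¬ (X 0 * X 1 + X 2 * X 3 : MvPolynomial (Fin 4) ℂ) ∣ (X 0 + X 1) := by
  intro h
  obtain ⟨t, ht⟩ := h
  have hv := congrArg (eval ![1, 0, 0, 0]) ht
  simp at hv

-- Part: the main initial-ideal computation
lemma part_main :
    initialIdeal ![0, 0, -1, 1]
        (Ideal.span {X 0 * X 1 + X 0 * X 2 + X 1 * X 2, X 3 - X 0 - X 1}) =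
      Ideal.span {X 0 + X 1, X 0 * X 1 + X 2 * X 3} := by
  classical
  apply le_antisymm
  · -- the hard inclusion
    apply Ideal.span_le.mpr
    rintro g ⟨f, hfI, hfne, rfl⟩
    obtain ⟨a, b, hab⟩ := Ideal.mem_span_pair.mp hfI
    set p : MvPolynomial (Fin 4) ℂ := b - a * X 2 with hp
    have hfAp : f = a * (X 0 * X 1 + X 2 * X 3) + (p * X 3 - p * (X 0 + X 1)) := by
      rw [hp]
      linear_combination -hab
    have hrel : ∀ k : ℤ, comp cc4 k f =
        comp cc4 k a * (X 0 * X 1 + X 2 * X 3) + comp cc4 (k - 1) p * X 3 -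
          comp cc4 k p * (X 0 + X 1) := by
      intro k
      conv_lhs => rw [hfAp]
      rw [comp_add, comp_sub, comp_mul_isHg hg_f3, comp_mul_isHg hg_X3,
        comp_mul_isHg hg_s4, sub_zero]
      ring
    set m := (f.support.image (dwt cc4)).min'
      ((Finset.image_nonempty).mpr (support_nonempty.mpr hfne)) with hm
    obtain ⟨k0, hk0⟩ : ∃ k0 : ℤ, ∀ k < k0, comp cc4 k p = 0 := by
      by_cases hp0 : p = 0
      · exact ⟨0, fun k _ => by rw [hp0, comp_zero]⟩
      · refine ⟨(p.support.image (dwt cc4)).min'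
          ((Finset.image_nonempty).mpr (support_nonempty.mpr hp0)), fun k hk => ?_⟩
        apply comp_eq_zero_of_not_mem
        intro hmem
        exact absurd (Finset.min'_le _ _ hmem) (by omega)
    have claim : ∀ j : ℕ, ∀ k : ℤ, k < m → k < k0 + j →
        (X 0 * X 1 + X 2 * X 3 : MvPolynomial (Fin 4) ℂ) ∣ comp cc4 k p := by
      intro j
      induction j with
      | zero =>
        intro k hkm hk
        rw [hk0 k (by omega)]
        exact dvd_zero _
      | succ j ih =>
        intro k hkm hk
        by_cases hcase : k < k0 + j
        · exact ih k hkm hcase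
        · have hkj : k = k0 + j := by omega
          have h0 : comp cc4 k f = 0 := by
            apply comp_eq_zero_of_not_mem
            intro hmem
            have := Finset.min'_le _ _ hmem
            rw [← hm] at this
            omega
          have hrelk := hrel k
          rw [h0] at hrelk
          obtain ⟨t, ht⟩ := ih (k - 1) (by omega) (by omega)
          have hdvd : (X 0 * X 1 + X 2 * X 3 : MvPolynomial (Fin 4) ℂ) ∣
              comp cc4 k p * (X 0 + X 1) := by
            refine ⟨comp cc4 k a + t * X 3, ?_⟩
            have : comp cc4 k p * (X 0 + X 1) =
                comp cc4 k a * (X 0 * X 1 + X 2 * X 3) + comp cc4 (k - 1) p * X 3 := by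
              linear_combination hrelk
            rw [this, ht]
            ring
          rcases prime_f3.2.2 _ _ hdvd with h | h
          · exact h
          · exact absurd h f3_not_dvd_s4
    have hfinal : (X 0 * X 1 + X 2 * X 3 : MvPolynomial (Fin 4) ℂ) ∣ comp cc4 (m - 1) p := by
      apply claim ((m - 1 - k0).toNat + 1) (m - 1) (by omega) (by omega)
    obtain ⟨t, ht⟩ := hfinal
    have hinit : initialForm ![0, 0, -1, 1] f = comp cc4 m f := by
      rw [init_eq_comp hw4 hfne, ← hm]
    rw [hinit, hrel m, ht]
    apply sub_mem
    · apply add_mem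
      · exact Ideal.mul_mem_left _ _
          (Ideal.subset_span (Set.mem_insert_of_mem _ rfl))
      · have hrw : (X 0 * X 1 + X 2 * X 3 : MvPolynomial (Fin 4) ℂ) * t * X 3 =
            (t * X 3) * (X 0 * X 1 + X 2 * X 3) := by ring
        rw [hrw]
        exact Ideal.mul_mem_left _ _
          (Ideal.subset_span (Set.mem_insert_of_mem _ rfl))
    · exact Ideal.mul_mem_left _ _ (Ideal.subset_span (Set.mem_insert _ _))
  · -- the easy inclusion
    apply Ideal.span_le.mpr
    intro x hx
    rcases hx with h | h
    · subst h
      apply Ideal.subset_span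
      refine ⟨-(X 3 - X 0 - X 1), neg_mem (Ideal.subset_span
        (Set.mem_insert_of_mem _ rfl)), ?_, ?_⟩
      · have hE : ∀ u ∈ (-(X 3) : MvPolynomial (Fin 4) ℂ).support, 0 < dwt cc4 u := by
          intro u hu
          rw [MvPolynomial.support_neg] at hu
          have := hg_X3 u hu
          omega
        have hsp := split_spec hw4 hg_s4 s4_ne hE
        intro h0
        apply hsp.1
        rw [← h0]
        ring
      · have hE : ∀ u ∈ (-(X 3) : MvPolynomial (Fin 4) ℂ).support, 0 < dwt cc4 u := by
          intro u hu
          rw [MvPolynomial.support_neg] at hu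
          have := hg_X3 u hu
          omega
        have hsp := split_spec hw4 hg_s4 s4_ne hE
        have hrw : (-(X 3 - X 0 - X 1) : MvPolynomial (Fin 4) ℂ) =
            (X 0 + X 1) + (-(X 3)) := by ring
        rw [hrw, hsp.2]
    · rw [Set.mem_singleton_iff] at h
      subst h
      apply Ideal.subset_span
      refine ⟨X 0 * X 1 + X 2 * X 3, ?_, f3_ne, ?_⟩
      · have hmem : (X 0 * X 1 + X 2 * X 3 : MvPolynomial (Fin 4) ℂ) =
            (X 0 * X 1 + X 0 * X 2 + X 1 * X 2) + X 2 * (X 3 - X 0 - X 1) := by ring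
        rw [hmem]
        exact add_mem (Ideal.subset_span (Set.mem_insert _ _))
          (Ideal.mul_mem_left _ _ (Ideal.subset_span (Set.mem_insert_of_mem _ rfl)))
      · have hE : ∀ u ∈ (0 : MvPolynomial (Fin 4) ℂ).support, 0 < dwt cc4 u := by
          intro u hu
          simp at hu
        have hsp := split_spec hw4 hg_f3 f3_ne hE
        have h2 := hsp.2
        rw [add_zero] at h2
        exact h2.symm

end MainParts


/-- Variables: `0 ↦ x, 1 ↦ y, 2 ↦ z, 3 ↦ u`. For the re-embedded ideal
`I' = ⟨xy + xz + yz, u − x − y⟩ ⊆ ℂ[x,y,z,u]`, the initial ideal with respect to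
`(0,0,−1,1)` is the binomial prime ideal `⟨x + y, xy + zu⟩`; in particular its
intersection with `ℂ[x,y,z]` contains the non-prime initial ideal
`⟨xz + yz⟩ = init_{(0,0,−1)}(⟨xy + xz + yz⟩)`. -/
theorem reembedding_initial_ideal_prime :
    initialIdeal ![0, 0, -1, 1]
        (Ideal.span {X 0 * X 1 + X 0 * X 2 + X 1 * X 2, X 3 - X 0 - X 1}) =
      Ideal.span {X 0 + X 1, X 0 * X 1 + X 2 * X 3} ∧
    (Ideal.span {X 0 + X 1, X 0 * X 1 + X 2 * X 3} :
        Ideal (MvPolynomial (Fin 4) ℂ)).IsPrime ∧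
    IsBinomialIdeal
      (Ideal.span {X 0 + X 1, X 0 * X 1 + X 2 * X 3} : Ideal (MvPolynomial (Fin 4) ℂ)) ∧
    initialIdeal ![0, 0, -1] (Ideal.span {X 0 * X 1 + X 0 * X 2 + X 1 * X 2}) =
      Ideal.span {X 0 * X 2 + X 1 * X 2} ∧
    ¬ (Ideal.span {X 0 * X 2 + X 1 * X 2} : Ideal (MvPolynomial (Fin 3) ℂ)).IsPrime ∧
    (Ideal.span {X 0 * X 2 + X 1 * X 2} : Ideal (MvPolynomial (Fin 3) ℂ)) ≤
      Ideal.comap (MvPolynomial.rename (Fin.castSucc : Fin 3 → Fin 4) :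
          MvPolynomial (Fin 3) ℂ →ₐ[ℂ] MvPolynomial (Fin 4) ℂ)
        (Ideal.span {X 0 + X 1, X 0 * X 1 + X 2 * X 3}) :=
  ⟨part_main, J_prime, part_binomial, part_three_vars, part_nonprime, part_comap⟩
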